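/- In the Passive-Aggressive update, each telescoping term satisfies ‖w_i − w̄‖² − ‖w_{i+1} − w̄‖² ≥ τ_i·(w_i·Φ̂_i − w_i·Φ_i + ℓ_i), where Φ_i = Φ(x_i,y_i), Φ̂_i = Φ(x_i,ŷ_i), ℓ_i = ℓ(y_i,ŷ_i), provided w̄·(Φ_i − Φ̂_i) ≥ ℓ_i. -/

import Mathlib

open scoped RealInnerProductSpace

/-- **One-step telescoping inequality for the Passive-Aggressive update.**
If `w' = w + τ • (Φᵢ − Φ̂ᵢ)` with
`τ = (⟪w,Φ̂ᵢ⟫ − ⟪w,Φᵢ⟫ + ℓᵢ)/‖Φᵢ − Φ̂ᵢ‖²`, `τ ≥ 0`, and the separator `wbar`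
satisfies `⟪wbar, Φᵢ − Φ̂ᵢ⟫ ≥ ℓᵢ`, then
`‖w − wbar‖² − ‖w' − wbar‖² ≥ τ·(⟪w,Φ̂ᵢ⟫ − ⟪w,Φᵢ⟫ + ℓᵢ)`. -/
theorem passive_aggressive_telescoping_term_lower_bound
    {E : Type*} [NormedAddCommGroup E] [InnerProductSpace ℝ E]
    (w wbar Phi PhiHat : E) (ℓi τ : ℝ)
    (hτdef : τ = (⟪w, PhiHat⟫ - ⟪w, Phi⟫ + ℓi) / ‖Phi - PhiHat‖ ^ 2)
    (hτnonneg : 0 ≤ τ)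
    (hsep : ℓi ≤ ⟪wbar, Phi - PhiHat⟫)
    (w' : E) (hupd : w' = w + τ • (Phi - PhiHat)) :
    τ * (⟪w, PhiHat⟫ - ⟪w, Phi⟫ + ℓi) ≤ ‖w - wbar‖ ^ 2 - ‖w' - wbar‖ ^ 2 := by
  subst hupd
  set u := Phi - PhiHat with hu
  have hexp : ‖w + τ • u - wbar‖ ^ 2
      = ‖w - wbar‖ ^ 2 + 2 * (τ * ⟪w - wbar, u⟫) + τ ^ 2 * ‖u‖ ^ 2 := by
    have : w + τ • u - wbar = (w - wbar) + τ • u := by abel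
    rw [this, norm_add_sq_real, real_inner_smul_right, norm_smul]
    simp [mul_pow, sq_abs]
  have hinner : ⟪w - wbar, u⟫ = (⟪w, Phi⟫ - ⟪w, PhiHat⟫) - ⟪wbar, u⟫ := by
    rw [inner_sub_left, hu, inner_sub_right]
  by_cases h0 : ‖u‖ = 0
  · have : τ = 0 := by rw [hτdef]; simp [hu ▸ h0, norm_eq_zero.mp h0]
    simp [this, hexp]
  · have hτu : τ * ‖u‖ ^ 2 = ⟪w, PhiHat⟫ - ⟪w, Phi⟫ + ℓi := by
      rw [hτdef]
      field_simp
    rw [hexp, hinner]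
    nlinarith [mul_nonneg hτnonneg (sub_nonneg.2 hsep), sq_nonneg τ, sq_nonneg ‖u‖]
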